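/- arXiv:2601.05972 — 2 statements merged into one kernel-verified Lean document; each statement's English description precedes it below -/
import Mathlib

section
/- Let A and B be flat layouts. Then Φ_A = Φ_B (meaning size(A) = size(B) and Φ_A(x) = Φ_B(x) for all x ∈ {0,…,size(A)−1}) if and only if coal(A) = coal(B). -/
/-- A flat layout, represented as its list of modes `(sᵢ, dᵢ)`:
the first component of each mode is a shape entry, the second a stride entry. -/
abbrev FlatLayout := List (ℕ × ℕ)

namespace FlatLayout

/-- Validity of a flat layout: every shape entry is a positive integer. -/
def Valid (L : FlatLayout) : Prop := ∀ p ∈ L, 0 < p.1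

/-- The size of a flat layout: the product of its shape entries. -/
def size (L : FlatLayout) : ℕ := (L.map Prod.fst).prod

/-- The cosize of a flat layout: `1 + Σ (sᵢ - 1) * dᵢ`. -/
def cosize (L : FlatLayout) : ℕ := 1 + (L.map fun p => (p.1 - 1) * p.2).sum

/-- The rank of a flat layout: its number of modes. -/
def rank (L : FlatLayout) : ℕ := L.length

/-- The layout function `Φ_L`: `Φ_L(x) = Σ xᵢ·dᵢ` where
`xᵢ = ⌊x / (s₁⋯sᵢ₋₁)⌋ mod sᵢ`. -/
def phi : FlatLayout → ℕ → ℕ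
  | [], _ => 0
  | (s, d) :: rest, x => x % s * d + phi rest (x / s)

/-- `squeeze L` deletes every mode whose shape entry equals `1`. -/
def squeeze (L : FlatLayout) : FlatLayout := L.filter fun p => p.1 != 1

/-- `filterZeros L` deletes every mode whose stride entry equals `0`. -/
def filterZeros (L : FlatLayout) : FlatLayout := L.filter fun p => p.2 != 0

/-- The ordering on modes: `(s,d) ⪯ (s',d')` iff `d < d'`, or `d = d'` and `s ≤ s'`. -/
def ModeLE (p q : ℕ × ℕ) : Prop := p.2 < q.2 ∨ (p.2 = q.2 ∧ p.1 ≤ q.1)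

instance : DecidableRel ModeLE := fun p q => by unfold ModeLE; infer_instance

/-- A flat layout is sorted if its consecutive modes are `⪯`-increasing. -/
def Sorted (L : FlatLayout) : Prop := L.Chain' ModeLE

/-- `sortL L` stably sorts the modes of `L` with respect to `⪯`. -/
def sortL (L : FlatLayout) : FlatLayout := L.mergeSort fun p q => decide (ModeLE p q)

/-- A flat layout is coalesced if no shape entry equals `1` and
for consecutive modes, `sᵢ·dᵢ ≠ dᵢ₊₁`. -/
def Coalesced (L : FlatLayout) : Prop :=
  (∀ p ∈ L, p.1 ≠ 1) ∧ L.Chain' fun p q => p.1 * p.2 ≠ q.2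

/-- Combine adjacent modes `(s,d), (s',d')` with `d' = s·d` into `(s·s', d)`, repeatedly. -/
def coalAux : List (ℕ × ℕ) → List (ℕ × ℕ)
  | [] => []
  | p :: rest =>
    match coalAux rest with
    | [] => [p]
    | q :: rest' =>
        if p.1 * p.2 = q.2 then (p.1 * q.1, p.2) :: rest' else p :: q :: rest'

/-- Coalesce of a flat layout: squeeze, then repeatedly combine adjacent modes
`(s,d), (s',d')` with `d' = s·d` into `(s·s', d)`. -/
def coal (L : FlatLayout) : FlatLayout := coalAux (squeeze L)

/-- Compactness: the layout function takes values in `{0, …, cosize L - 1}` and induces a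
bijection `{0, …, size L - 1} → {0, …, cosize L - 1}`. -/
def Compact (L : FlatLayout) : Prop :=
  Set.BijOn (phi L) {x | x < size L} {y | y < cosize L}

/-- `B` is a complement of `A` (written `A ⊥ B`) if the concatenation `A ⋆ B` is compact. -/
def Perp (A B : FlatLayout) : Prop := Compact (A ++ B)

/-- `A` is complementable if, writing `sort(squeeze A) = (s₁,…,sₘ):(d₁,…,dₘ)`,
`sᵢ·dᵢ` divides `dᵢ₊₁` for all `1 ≤ i < m`. -/
def Complementable (A : FlatLayout) : Prop :=
  (sortL (squeeze A)).Chain' fun p q => p.1 * p.2 ∣ q.2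

/-- `B` is an `N`-complement of `A` if `B` is a complement of `A`
and `size A * size B = N`. -/
def IsNComplement (A B : FlatLayout) (N : ℕ) : Prop :=
  Perp A B ∧ size A * size B = N

/-- `A` is `N`-complementable if, writing `sort(squeeze A) = (s₁,…,sₘ):(d₁,…,dₘ)`,
`sᵢ·dᵢ ∣ dᵢ₊₁` for all `1 ≤ i < m`, and `sₘ·dₘ ∣ N`. -/
def NComplementable (A : FlatLayout) (N : ℕ) : Prop :=
  ((sortL (squeeze A)).Chain' fun p q => p.1 * p.2 ∣ q.2) ∧
  ∀ p, (sortL (squeeze A)).getLast? = some p → p.1 * p.2 ∣ N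

/-- Given `l = [(s₁,d₁),…,(sₘ,dₘ)]`, the layout
`C = (d₁, d₂/(s₁d₁), …, dₘ/(sₘ₋₁dₘ₋₁)) : (1, s₁d₁, …, sₘ₋₁dₘ₋₁)`. -/
def compModes (l : List (ℕ × ℕ)) : List (ℕ × ℕ) :=
  match l with
  | [] => []
  | (_, d₁) :: t =>
      (d₁, 1) :: (l.zip t).map fun pq => (pq.2.2 / (pq.1.1 * pq.1.2), pq.1.1 * pq.1.2)

/-- The complement `comp A = coal C` of a complementable flat layout `A`. -/
def comp (A : FlatLayout) : FlatLayout := coal (compModes (sortL (squeeze A)))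

/-- Given `l = [(s₁,d₁),…,(sₘ,dₘ)]` and `N`, the layout
`C = (d₁, d₂/(s₁d₁), …, dₘ/(sₘ₋₁dₘ₋₁), N/(sₘdₘ)) : (1, s₁d₁, …, sₘ₋₁dₘ₋₁, sₘdₘ)`. -/
def compNModes (l : List (ℕ × ℕ)) (N : ℕ) : List (ℕ × ℕ) :=
  match l.getLast? with
  | none => [(N, 1)]
  | some (sm, dm) => compModes l ++ [(N / (sm * dm), sm * dm)]

/-- The `N`-complement `comp(A, N) = coal C` of an `N`-complementable flat layout `A`. -/
def compN (A : FlatLayout) (N : ℕ) : FlatLayout :=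
  coal (compNModes (sortL (squeeze A)) N)

/-- `L` is tractable if, writing `sort L = (s₁,…,sₘ):(d₁,…,dₘ)`, for every `1 ≤ i < m`
either `dᵢ = 0` or `sᵢ·dᵢ` divides `dᵢ₊₁`. -/
def Tractable (L : FlatLayout) : Prop :=
  (sortL L).Chain' fun p q => p.2 = 0 ∨ p.1 * p.2 ∣ q.2

end FlatLayout


namespace FlatLayout

lemma size_cons' (p : ℕ × ℕ) (L : FlatLayout) : size (p :: L) = p.1 * size L := by
  simp [size]

lemma size_cons2 (s d : ℕ) (L : FlatLayout) : size ((s, d) :: L) = s * size L := by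
  simp [size]

lemma phi_cons' (s d : ℕ) (L : FlatLayout) (x : ℕ) :
    phi ((s, d) :: L) x = x % s * d + phi L (x / s) := rfl

lemma phi_zero' (L : FlatLayout) : phi L 0 = 0 := by
  induction L with
  | nil => rfl
  | cons p L ih => obtain ⟨s, d⟩ := p; simp [phi_cons', ih]

lemma size_squeeze' (L : FlatLayout) : size (squeeze L) = size L := by
  induction L with
  | nil => rfl
  | cons p L ih =>
    obtain ⟨s, d⟩ := p
    by_cases h : s = 1
    · simp [squeeze, List.filter_cons, h, size_cons'] at ih ⊢
      simpa [size] using ih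
    · simp only [squeeze, List.filter_cons] at ih ⊢
      simp [h, size_cons', ih]

lemma phi_squeeze' (L : FlatLayout) (x : ℕ) : phi (squeeze L) x = phi L x := by
  induction L generalizing x with
  | nil => rfl
  | cons p L ih =>
    obtain ⟨s, d⟩ := p
    by_cases h : s = 1
    · simp only [squeeze, List.filter_cons] at ih ⊢
      simp [h, phi_cons', ih, Nat.mod_one]
    · simp only [squeeze, List.filter_cons] at ih ⊢
      simp [h, phi_cons', ih]

lemma size_coalAux (L : List (ℕ × ℕ)) : size (coalAux L) = size L := by
  induction L with
  | nil => rfl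
  | cons p L ih =>
    obtain ⟨s, d⟩ := p
    rcases hc : coalAux L with _ | ⟨q, rest'⟩
    · rw [hc] at ih
      simp only [coalAux, hc]
      simp [size] at ih
      simp [size, ← ih]
    · rw [hc] at ih
      simp only [coalAux, hc]
      obtain ⟨t, e⟩ := q
      split_ifs with h
      · show size ((s * t, d) :: rest') = size ((s, d) :: L)
        rw [size_cons2, size_cons2, ← ih, size_cons2]
        ring
      · show size ((s, d) :: (t, e) :: rest') = size ((s, d) :: L)
        rw [size_cons2, ih, size_cons2]

lemma phi_coalAux (L : List (ℕ × ℕ)) (x : ℕ) : phi (coalAux L) x = phi L x := by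
  induction L generalizing x with
  | nil => rfl
  | cons p L ih =>
    obtain ⟨s, d⟩ := p
    rcases hc : coalAux L with _ | ⟨q, rest'⟩
    · rw [hc] at ih
      simp only [coalAux, hc]
      simp [phi_cons', ← ih, phi]
    · rw [hc] at ih
      simp only [coalAux, hc]
      obtain ⟨t, e⟩ := q
      split_ifs with h
      · simp only at h
        simp only [phi_cons', ← ih, ← h]
        rw [← Nat.div_div_eq_div_mul, Nat.mod_mul]
        ring_nf
      · simp [phi_cons', ← ih]

lemma size_coal (L : FlatLayout) : size (coal L) = size L := by
  rw [coal, size_coalAux, size_squeeze']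

lemma phi_coal (L : FlatLayout) (x : ℕ) : phi (coal L) x = phi L x := by
  rw [coal, phi_coalAux, phi_squeeze']

lemma coalAux_two_and_chain (L : List (ℕ × ℕ)) (h : ∀ p ∈ L, 2 ≤ p.1) :
    (∀ p ∈ coalAux L, 2 ≤ p.1) ∧
      (coalAux L).Chain' fun p q => p.1 * p.2 ≠ q.2 := by
  induction L with
  | nil => exact ⟨by simp [coalAux], List.isChain_nil⟩
  | cons p L ih =>
    obtain ⟨s, d⟩ := p
    have hs : 2 ≤ s := h (s, d) List.mem_cons_self
    have hL : ∀ p ∈ L, 2 ≤ p.1 := fun q hq => h q (List.mem_cons_of_mem _ hq)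
    obtain ⟨ih2, ihc⟩ := ih hL
    rcases hc : coalAux L with _ | ⟨q, rest'⟩
    · simp only [coalAux, hc]
      refine ⟨?_, List.isChain_singleton _⟩
      intro r hr
      simp at hr
      simp [hr, hs]
    · rw [hc] at ih2 ihc
      simp only [coalAux, hc]
      obtain ⟨u, f⟩ := q
      split_ifs with hm
      · simp only at hm
        constructor
        · intro r hr
          rcases List.mem_cons.mp hr with h1 | h1
          · subst h1
            have hq2 : 2 ≤ u := ih2 (u, f) List.mem_cons_self
            simp only
            exact le_trans hq2 (Nat.le_mul_of_pos_left _ (by omega))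
          · exact ih2 r (List.mem_cons_of_mem _ h1)
        · rcases rest' with _ | ⟨r, rest''⟩
          · exact List.isChain_singleton _
          · simp only [List.Chain', List.isChain_cons_cons]
            simp only [List.Chain', List.isChain_cons_cons] at ihc
            refine ⟨?_, ihc.2⟩
            intro hcontra
            apply ihc.1
            rw [← hm]
            rw [← hcontra]
            ring
      · constructor
        · intro r hr
          rcases List.mem_cons.mp hr with h1 | h1
          · subst h1; exact hs
          · exact ih2 r h1
        · exact List.isChain_cons_cons.mpr ⟨hm, ihc⟩

lemma size_pos' (L : FlatLayout) (h : ∀ p ∈ L, 2 ≤ p.1) : 0 < size L := by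
  induction L with
  | nil => simp [size]
  | cons p L ih =>
    rw [size_cons']
    have := h p List.mem_cons_self
    have := ih fun q hq => h q (List.mem_cons_of_mem _ hq)
    positivity

lemma head_lt_absurd (s d t e : ℕ) (L' M' : FlatLayout)
    (hL2 : ∀ p ∈ ((s, d) :: L' : FlatLayout), 2 ≤ p.1)
    (hM2 : ∀ p ∈ ((t, e) :: M' : FlatLayout), 2 ≤ p.1)
    (hLc : ((s, d) :: L' : List (ℕ × ℕ)).Chain' fun p q => p.1 * p.2 ≠ q.2)
    (hsize : size ((s, d) :: L') = size ((t, e) :: M'))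
    (hphi : ∀ x < size ((s, d) :: L'), phi ((s, d) :: L') x = phi ((t, e) :: M') x)
    (hde : d = e) (hst : s < t) : False := by
  have hs : 2 ≤ s := hL2 (s, d) List.mem_cons_self
  have hMpos : 0 < size M' := size_pos' M' fun q hq => hM2 q (List.mem_cons_of_mem _ hq)
  have hsltL : s < size ((s, d) :: L') := by
    rw [hsize, size_cons']
    calc s < t := hst
    _ = t * 1 := (mul_one t).symm
    _ ≤ t * size M' := Nat.mul_le_mul_left t hMpos
  have hp := hphi s hsltL
  rw [phi_cons', phi_cons', Nat.mod_self, Nat.div_self (by omega),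
      Nat.mod_eq_of_lt hst, Nat.div_eq_of_lt hst, phi_zero'] at hp
  simp only [zero_mul, zero_add, add_zero] at hp
  rcases L' with _ | ⟨⟨s', d'⟩, L''⟩
  · rw [size_cons'] at hsltL
    simp only [size, List.map_nil, List.prod_nil, mul_one] at hsltL
    exact lt_irrefl s hsltL
  · have hs' : 2 ≤ s' := hL2 (s', d') (by simp)
    rw [phi_cons', Nat.mod_eq_of_lt hs', Nat.div_eq_of_lt hs', phi_zero'] at hp
    simp only [one_mul, add_zero] at hp
    simp only [List.Chain', List.isChain_cons_cons] at hLc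
    apply hLc.1
    show s * d = d'
    rw [hde]
    exact hp.symm

lemma coalesced_eq (L : FlatLayout) : ∀ M : FlatLayout,
    (∀ p ∈ L, 2 ≤ p.1) → (∀ p ∈ M, 2 ≤ p.1) →
    (L.Chain' fun p q => p.1 * p.2 ≠ q.2) → (M.Chain' fun p q => p.1 * p.2 ≠ q.2) →
    size L = size M → (∀ x < size L, phi L x = phi M x) → L = M := by
  induction L with
  | nil =>
    intro M _ hM2 _ _ hsize _
    rcases M with _ | ⟨⟨t, e⟩, M'⟩
    · rfl
    · exfalso
      have ht : 2 ≤ t := hM2 (t, e) List.mem_cons_self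
      have : 0 < size M' := size_pos' M' fun q hq => hM2 q (List.mem_cons_of_mem _ hq)
      rw [size_cons'] at hsize
      simp only [size, List.map_nil, List.prod_nil] at hsize this
      nlinarith
  | cons p L' ih =>
    intro M hL2 hM2 hLc hMc hsize hphi
    obtain ⟨s, d⟩ := p
    have hs : 2 ≤ s := hL2 (s, d) List.mem_cons_self
    have hLpos : 0 < size L' := size_pos' L' fun q hq => hL2 q (List.mem_cons_of_mem _ hq)
    rcases M with _ | ⟨⟨t, e⟩, M'⟩
    · exfalso
      rw [size_cons'] at hsize
      simp [size] at hsize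
      nlinarith
    · have ht : 2 ≤ t := hM2 (t, e) List.mem_cons_self
      have hMpos : 0 < size M' := size_pos' M' fun q hq => hM2 q (List.mem_cons_of_mem _ hq)
      -- d = e
      have h1lt : 1 < size ((s, d) :: L') := by
        rw [size_cons']; nlinarith
      have hde : d = e := by
        have hp := hphi 1 h1lt
        rw [phi_cons', phi_cons', Nat.mod_eq_of_lt (by omega), Nat.div_eq_of_lt (by omega),
            Nat.mod_eq_of_lt (by omega), Nat.div_eq_of_lt (by omega),
            phi_zero', phi_zero'] at hp
        simpa using hp
      -- s = t
      have hst : s = t := by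
        rcases lt_trichotomy s t with h | h | h
        · exact absurd (head_lt_absurd s d t e L' M' hL2 hM2 hLc hsize hphi hde h) not_false
        · exact h
        · exfalso
          refine head_lt_absurd t e s d M' L' hM2 hL2 hMc hsize.symm ?_ hde.symm h
          intro x hx
          exact (hphi x (by rwa [hsize])).symm
      subst hst; subst hde
      have hszL' : size L' = size M' := by
        rw [size_cons', size_cons'] at hsize
        exact Nat.eq_of_mul_eq_mul_left (by omega) hsize
      have hphiL' : ∀ x < size L', phi L' x = phi M' x := by
        intro x hx
        have hlt : s * x < size ((s, d) :: L') := by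
          rw [size_cons']
          show s * x < (s, d).1 * size L'
          exact mul_lt_mul_of_pos_left hx (by omega : (0:ℕ) < s)
        have hp := hphi (s * x) hlt
        rw [phi_cons', phi_cons', Nat.mul_mod_right,
            Nat.mul_div_cancel_left x (by omega : 0 < s)] at hp
        simpa using hp
      have : L' = M' :=
        ih M' (fun q hq => hL2 q (List.mem_cons_of_mem _ hq))
          (fun q hq => hM2 q (List.mem_cons_of_mem _ hq))
          (List.isChain_cons.mp hLc).2 (List.isChain_cons.mp hMc).2 hszL' hphiL'
      rw [this]

lemma coal_two_chain (L : FlatLayout) (hL : L.Valid) :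
    (∀ p ∈ coal L, 2 ≤ p.1) ∧ (coal L).Chain' fun p q => p.1 * p.2 ≠ q.2 := by
  apply coalAux_two_and_chain
  intro p hp
  rw [squeeze, List.mem_filter] at hp
  have := hL p hp.1
  have h2 := hp.2
  simp at h2
  omega

end FlatLayout

open FlatLayout in
theorem phi_eq_iff_coal_eq (A B : FlatLayout) (hA : A.Valid) (hB : B.Valid) :
    (size A = size B ∧ ∀ x < size A, phi A x = phi B x) ↔ coal A = coal B := by
  constructor
  · rintro ⟨hsize, hphi⟩
    obtain ⟨hA2, hAc⟩ := coal_two_chain A hA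
    obtain ⟨hB2, hBc⟩ := coal_two_chain B hB
    apply coalesced_eq (coal A) (coal B) hA2 hB2 hAc hBc
    · rw [size_coal, size_coal, hsize]
    · intro x hx
      rw [phi_coal, phi_coal]
      exact hphi x (by rwa [size_coal] at hx)
  · intro h
    constructor
    · rw [← size_coal A, ← size_coal B, h]
    · intro x _
      rw [← phi_coal A, ← phi_coal B, h]
end

section
/- If a flat layout A is complementable and sorted, then it's layout function Φ_A is monotone non-decreasing: for all x ≤ y in {0,…,size(A)−1}, Φ_A(x) ≤ Φ_A(y). -/
open FlatLayout

def headD2 : FlatLayout → ℕ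
  | [] => 0
  | p :: _ => p.2

theorem modeLE_trans : Transitive ModeLE := by
  rintro p q r (h | ⟨h, h'⟩) (g | ⟨g, g'⟩) <;> unfold ModeLE <;> omega

theorem key : ∀ (L : FlatLayout), Valid L →
    (L.Chain' fun p q => p.1 * p.2 ∣ q.2) → (L.Chain' ModeLE) →
    ∀ a b, a ≤ b → b < size L → phi L a + headD2 L * (b - a) ≤ phi L b := by
  intro L
  induction L with
  | nil => intro _ _ _ a b hab hb; simp [phi, headD2]
  | cons p rest ih =>
    obtain ⟨s, d⟩ := p
    intro hv hdiv hsort a b hab hb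
    have hs : 0 < s := hv (s, d) (by simp)
    have hsize : b < s * size rest := by simpa [size] using hb
    have hdr : a / s ≤ b / s := Nat.div_le_div_right hab
    have hbs : b / s < size rest := Nat.div_lt_of_lt_mul (by rwa [mul_comm] at hsize)
    have hIH := ih (fun q hq => hv q (by simp [hq])) hdiv.tail hsort.tail
      (a / s) (b / s) hdr hbs
    -- key2 : s*d*(b/s - a/s) ≤ headD2 rest * (b/s - a/s)
    have key2 : s * d * (b / s - a / s) ≤ headD2 rest * (b / s - a / s) := by
      rcases Nat.eq_or_lt_of_le hdr with heq | hlt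
      · simp [← heq]
      · -- rest nonempty
        cases rest with
        | nil =>
          have h0 : b / s = 0 := by simpa [size] using hbs
          exact absurd (h0 ▸ hlt) (Nat.not_lt_zero _)
        | cons q t =>
          have hdvd : s * d ∣ q.2 := (List.isChain_cons_cons.mp hdiv).1
          have hle : ModeLE (s, d) q := (List.isChain_cons_cons.mp hsort).1
          apply Nat.mul_le_mul_right
          rcases Nat.eq_zero_or_pos d with rfl | hd
          · simp
          · have hq2 : 0 < q.2 := by rcases hle with h | ⟨h, _⟩ <;> omega
            exact Nat.le_of_dvd hq2 hdvd
    have ha := Nat.div_add_mod a s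
    have hbb := Nat.div_add_mod b s
    have hma : a % s < s := Nat.mod_lt _ hs
    have hmb : b % s < s := Nat.mod_lt _ hs
    simp only [phi, headD2]
    zify [hab, hdr] at *
    nlinarith [hIH, key2]

theorem phi_squeeze (L : FlatLayout) (x : ℕ) : phi (squeeze L) x = phi L x := by
  induction L generalizing x with
  | nil => rfl
  | cons p rest ih =>
    obtain ⟨s, d⟩ := p
    by_cases h1 : s = 1
    · subst h1
      simp [squeeze, List.filter, phi, Nat.mod_one, Nat.div_one]
      exact ih x
    · simp only [squeeze, List.filter] at *
      have : ((1:ℕ) != 1) = false := by simp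
      simp only [show (s != 1) = true by simpa using h1]
      simp [phi, ih]

theorem size_squeeze (L : FlatLayout) : size (squeeze L) = size L := by
  induction L with
  | nil => rfl
  | cons p rest ih =>
    obtain ⟨s, d⟩ := p
    by_cases h1 : s = 1
    · subst h1; simp [squeeze, List.filter, size] at *; simpa using ih
    · simp only [squeeze, List.filter] at *
      simp only [show (s != 1) = true by simpa using h1]
      simp [size] at *; exact Or.inl ih


open FlatLayout in
theorem phi_monotone_of_complementable_sorted (A : FlatLayout) (hA : A.Valid)
    (hc : Complementable A) (hs : Sorted A) :
    ∀ x y : ℕ, x ≤ y → y < size A → phi A x ≤ phi A y := by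
  intro x y hxy hy
  have : IsTrans (ℕ × ℕ) ModeLE := ⟨fun _ _ _ h h' => modeLE_trans h h'⟩
  have hpw : A.Pairwise ModeLE := List.isChain_iff_pairwise.mp hs
  have hpws : (squeeze A).Pairwise ModeLE := hpw.sublist List.filter_sublist
  have hsorted : sortL (squeeze A) = squeeze A := by
    apply List.mergeSort_of_pairwise
    exact hpws.imp (fun h => decide_eq_true h)
  unfold Complementable at hc
  rw [hsorted] at hc
  have hchain : (squeeze A).Chain' ModeLE := hpws.isChain
  have hv : Valid (squeeze A) := fun p hp => hA p (List.mem_of_mem_filter hp)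
  have := key (squeeze A) hv hc hchain x y hxy (by rwa [size_squeeze])
  rw [phi_squeeze, phi_squeeze] at this
  omega
end
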